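/- Assume condition (C). Then for every γ ∈ ℝ the optimal value of the long-run risk-sensitive averaged criterion is independent of the starting point: for all x, x' ∈ E, sup_{π∈Π} J_γ(x,π) = sup_{π∈Π} J_γ(x',π). -/

import Mathlib

open Filter Real Topology

/-- A (history-dependent) policy: at time `n`, the action is a function of `(X_0, …, X_n)`. -/
abbrev Policy (E U : Type*) : Type _ := ∀ n : ℕ, (Fin (n + 1) → E) → U

/-- The stationary Markov policy induced by `u : E → U`. -/
def stationaryPolicy {E U : Type*} (u : E → U) : Policy E U :=
  fun n h => u (h (Fin.last n))

/-- The Markov policy induced by a sequence `u : ℕ → E → U`. -/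
def markovPolicy {E U : Type*} (u : ℕ → E → U) : Policy E U :=
  fun n h => u n (h (Fin.last n))

/-- The action taken at time `i` by policy `pol` along the path `ω = (x_0, …, x_n)`. -/
def act {E U : Type*} (pol : Policy E U) {n : ℕ} (ω : Fin (n + 1) → E) (i : Fin n) : U :=
  pol i.1 (fun j => ω (Fin.castLE (Nat.succ_le_succ i.2.le) j))

/-- Probability of the path `ω = (x_0, …, x_n)` under policy `pol` started at `x`:
`∏_{i=0}^{n-1} P^{a_i}(x_i, x_{i+1})` if `x_0 = x`, and `0` otherwise. -/
def pathProb {E U : Type*} [DecidableEq E] (P : U → E → E → ℝ) (pol : Policy E U)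
    (x : E) (n : ℕ) (ω : Fin (n + 1) → E) : ℝ :=
  (if ω 0 = x then 1 else 0) * ∏ i : Fin n, P (act pol ω i) (ω i.castSucc) (ω i.succ)

/-- Expectation `E_x^pol[f(X_0, …, X_n)]`. -/
noncomputable def expVal {E U : Type*} [Fintype E] [DecidableEq E]
    (P : U → E → E → ℝ) (pol : Policy E U) (x : E) (n : ℕ)
    (f : (Fin (n + 1) → E) → ℝ) : ℝ :=
  ∑ ω : Fin (n + 1) → E, pathProb P pol x n ω * f ω

/-- The (possibly discounted) cumulative reward `Σ_{i=0}^{n-1} d i * c(X_i, a_i)` along `ω`. -/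
def rewSum {E U : Type*} (c : E → U → ℝ) (pol : Policy E U) (d : ℕ → ℝ) (n : ℕ)
    (ω : Fin (n + 1) → E) : ℝ :=
  ∑ i : Fin n, d i.1 * c (ω i.castSucc) (act pol ω i)

/-- Long-run risk-sensitive averaged criterion `J_γ(x, pol)`. -/
noncomputable def Javg {E U : Type*} [Fintype E] [DecidableEq E]
    (P : U → E → E → ℝ) (c : E → U → ℝ) (γ : ℝ) (x : E) (pol : Policy E U) : ℝ :=
  if γ = 0 then
    liminf (fun n : ℕ =>
      (1 / (n : ℝ)) * expVal P pol x n (rewSum c pol (fun _ => 1) n)) atTop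
  else
    liminf (fun n : ℕ =>
      (1 / ((n : ℝ) * γ)) * Real.log (expVal P pol x n
        (fun ω => Real.exp (γ * rewSum c pol (fun _ => 1) n ω)))) atTop

/-- Discounted risk-sensitive criterion `J_γ(x, pol; β)`. -/
noncomputable def Jdisc {E U : Type*} [Fintype E] [DecidableEq E]
    (P : U → E → E → ℝ) (c : E → U → ℝ) (γ : ℝ) (x : E) (pol : Policy E U) (β : ℝ) : ℝ :=
  if γ = 0 then
    limUnder atTop (fun n : ℕ => expVal P pol x n (rewSum c pol (fun i => β ^ i) n))
  else
    (1 / γ) * Real.log (limUnder atTop (fun n : ℕ =>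
      expVal P pol x n (fun ω => Real.exp (γ * rewSum c pol (fun i => β ^ i) n ω))))

/-- Row-stochasticity of the family of transition matrices `(P^a)_{a ∈ U}`. -/
def IsStochastic {E U : Type*} [Fintype E] (P : U → E → E → ℝ) : Prop :=
  (∀ a x y, 0 ≤ P a x y) ∧ ∀ a x, ∑ y, P a x y = 1

/-- Condition (C): strong uniform mixing, `min_{a} min_{x,y} P^a(x,y) > 0`. -/
def CondC {E U : Type*} (P : U → E → E → ℝ) : Prop :=
  ∀ a x y, 0 < P a x y

/-- `w` solves the risk-sensitive discounted Bellman equation for discount `β`. -/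
def IsBellmanSol {E U : Type*} [Fintype E] [Fintype U]
    (P : U → E → E → ℝ) (c : E → U → ℝ) (β : ℝ) (w : E → ℝ → ℝ) : Prop :=
  ∀ x : E, ∀ γ : ℝ, γ ≠ 0 →
    w x γ = ⨆ a : U, (c x a + (1 / γ) * Real.log (∑ y, Real.exp (w y (β * γ)) * P a x y))

section Aux

variable {E U : Type*} [Fintype E] [DecidableEq E] [Fintype U] [Nonempty E] [Nonempty U]

set_option linter.unusedSectionVars false

lemma snoc_of_lt {n : ℕ} (ω : Fin (n + 1) → E) (y : E) (k : Fin (n + 2)) (hk : k.1 < n + 1) :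
    (Fin.snoc ω y : Fin (n + 2) → E) k = ω ⟨k.1, hk⟩ := by
  have h := Fin.snoc_castSucc (α := fun _ => E) (p := ω) (x := y) (i := ⟨k.1, hk⟩)
  rw [← h]
  congr 1

lemma act_snoc_castSucc (pol : Policy E U) {n : ℕ} (ω : Fin (n + 1) → E) (y : E) (i : Fin n) :
    act pol (Fin.snoc ω y) i.castSucc = act pol ω i := by
  show pol i.1 _ = pol i.1 _
  congr 1
  funext j
  rw [snoc_of_lt ω y _ (by have h1 := j.2; have h2 := i.2; simp only [Fin.coe_castSucc] at h1; simp only [Fin.coe_castLE]; omega)]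
  exact congrArg ω (Fin.ext (by simp))

lemma act_snoc_last (pol : Policy E U) {n : ℕ} (ω : Fin (n + 1) → E) (y : E) :
    act pol (Fin.snoc ω y) (Fin.last n) = pol n ω := by
  show pol n _ = pol n ω
  congr 1
  funext j
  rw [snoc_of_lt ω y _ (by have h1 := j.2; simp only [Fin.val_last] at h1; simp only [Fin.coe_castLE]; omega)]
  exact congrArg ω (Fin.ext (by simp))

lemma act_stationary (u : E → U) {n : ℕ} (ω : Fin (n + 1) → E) (i : Fin n) :
    act (stationaryPolicy u) ω i = u (ω i.castSucc) := by
  show u _ = u _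
  exact congrArg u (congrArg ω (Fin.ext (by simp [Fin.last])))

lemma pathProb_snoc (P : U → E → E → ℝ) (pol : Policy E U) (x : E) {n : ℕ}
    (ω : Fin (n + 1) → E) (y : E) :
    pathProb P pol x (n + 1) (Fin.snoc ω y) =
      pathProb P pol x n ω * P (pol n ω) (ω (Fin.last n)) y := by
  unfold pathProb
  have h0 : (Fin.snoc ω y : Fin (n + 2) → E) 0 = ω 0 := by
    rw [snoc_of_lt ω y 0 (by simp)]
    exact congrArg ω (Fin.ext (by simp))
  rw [h0, Fin.prod_univ_castSucc]
  simp only [act_snoc_castSucc, act_snoc_last, Fin.succ_castSucc, Fin.snoc_castSucc,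
    Fin.succ_last, Fin.snoc_last]
  ring

lemma rewSum_snoc (c : E → U → ℝ) (pol : Policy E U) (d : ℕ → ℝ) {n : ℕ}
    (ω : Fin (n + 1) → E) (y : E) :
    rewSum c pol d (n + 1) (Fin.snoc ω y) =
      rewSum c pol d n ω + d n * c (ω (Fin.last n)) (pol n ω) := by
  unfold rewSum
  rw [Fin.sum_univ_castSucc]
  simp only [act_snoc_castSucc, act_snoc_last, Fin.snoc_castSucc, Fin.coe_castSucc,
    Fin.val_last]

/-- The snoc equivalence. -/
def snocEquiv (E : Type*) (n : ℕ) : ((Fin (n + 1) → E) × E) ≃ (Fin (n + 2) → E) where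
  toFun p := Fin.snoc p.1 p.2
  invFun ψ := (Fin.init ψ, ψ (Fin.last (n + 1)))
  left_inv p := by simp [Fin.init_snoc, Fin.snoc_last]
  right_inv ψ := by simp [Fin.snoc_init_self]

lemma expVal_succ (P : U → E → E → ℝ) (pol : Policy E U) (x : E) (n : ℕ)
    (f : (Fin (n + 2) → E) → ℝ) :
    expVal P pol x (n + 1) f =
      ∑ ω : Fin (n + 1) → E, pathProb P pol x n ω *
        ∑ y : E, P (pol n ω) (ω (Fin.last n)) y * f (Fin.snoc ω y) := by
  unfold expVal
  rw [← Equiv.sum_comp (snocEquiv E n) (fun ψ => pathProb P pol x (n+1) ψ * f ψ),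
    Fintype.sum_prod_type]
  refine Finset.sum_congr rfl fun ω _ => ?_
  rw [Finset.mul_sum]
  refine Finset.sum_congr rfl fun y _ => ?_
  show pathProb P pol x (n+1) (Fin.snoc ω y) * f (Fin.snoc ω y) = _
  rw [pathProb_snoc]
  ring

lemma expVal_zero (P : U → E → E → ℝ) (pol : Policy E U) (x : E)
    (f : (Fin 1 → E) → ℝ) :
    expVal P pol x 0 f = f (fun _ => x) := by
  unfold expVal pathProb
  rw [← Equiv.sum_comp (Equiv.funUnique (Fin 1) E).symm
    (fun ψ => ((if ψ 0 = x then (1:ℝ) else 0) * ∏ i : Fin 0, P (act pol ψ i) (ψ i.castSucc) (ψ i.succ)) * f ψ)]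
  simp only [Equiv.funUnique_symm_apply, Finset.univ_unique, Fin.prod_univ_zero, mul_one]
  rw [Finset.sum_eq_single x (fun b _ hb => by simp [Function.const, hb])
    (fun h => absurd (Finset.mem_univ x) h)]
  have h1 : ((fun _ => x : Fin 1 → E)) = ((Equiv.funUnique (Fin 1) E).symm x) :=
    funext fun j => rfl
  rw [h1]
  simp


lemma pathProb_nonneg {P : U → E → E → ℝ} (hP : IsStochastic P) (pol : Policy E U)
    (x : E) (n : ℕ) (ω : Fin (n + 1) → E) : 0 ≤ pathProb P pol x n ω := by
  unfold pathProb
  apply mul_nonneg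
  · split <;> norm_num
  · exact Finset.prod_nonneg fun i _ => hP.1 _ _ _

lemma P_le_one {P : U → E → E → ℝ} (hP : IsStochastic P) (a : U) (x y : E) :
    P a x y ≤ 1 := by
  calc P a x y ≤ ∑ z, P a x z :=
        Finset.single_le_sum (fun z _ => hP.1 a x z) (Finset.mem_univ y)
    _ = 1 := hP.2 a x

lemma sum_pathProb {P : U → E → E → ℝ} (hP : IsStochastic P) (pol : Policy E U)
    (x : E) : ∀ n : ℕ, ∑ ω : Fin (n + 1) → E, pathProb P pol x n ω = 1 := by
  intro n
  induction n with
  | zero =>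
    have h := expVal_zero P pol x (fun _ => (1 : ℝ))
    unfold expVal at h
    simpa using h
  | succ n ih =>
    have h := expVal_succ P pol x n (fun _ => (1 : ℝ))
    unfold expVal at h
    simp only [mul_one] at h
    rw [h]
    calc ∑ ω : Fin (n+1) → E, pathProb P pol x n ω * ∑ y, P (pol n ω) (ω (Fin.last n)) y
        = ∑ ω : Fin (n+1) → E, pathProb P pol x n ω := by
          refine Finset.sum_congr rfl fun ω _ => ?_
          rw [hP.2, mul_one]
      _ = 1 := ih

lemma expVal_le_of_le {P : U → E → E → ℝ} (hP : IsStochastic P) (pol : Policy E U)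
    (x : E) (n : ℕ) {f g : (Fin (n + 1) → E) → ℝ} (h : ∀ ω, f ω ≤ g ω) :
    expVal P pol x n f ≤ expVal P pol x n g :=
  Finset.sum_le_sum fun ω _ =>
    mul_le_mul_of_nonneg_left (h ω) (pathProb_nonneg hP pol x n ω)

lemma expVal_const_bound {P : U → E → E → ℝ} (hP : IsStochastic P) (pol : Policy E U)
    (x : E) (n : ℕ) {f : (Fin (n + 1) → E) → ℝ} {B : ℝ} (h : ∀ ω, f ω ≤ B) :
    expVal P pol x n f ≤ B := by
  have := expVal_le_of_le hP pol x n (g := fun _ => B) h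
  unfold expVal at this
  rwa [← Finset.sum_mul, sum_pathProb hP, one_mul] at this

lemma expVal_const_lower {P : U → E → E → ℝ} (hP : IsStochastic P) (pol : Policy E U)
    (x : E) (n : ℕ) {f : (Fin (n + 1) → E) → ℝ} {B : ℝ} (h : ∀ ω, B ≤ f ω) :
    B ≤ expVal P pol x n f := by
  have := expVal_le_of_le hP pol x n (f := fun _ => B) h
  unfold expVal at this
  rwa [← Finset.sum_mul, sum_pathProb hP, one_mul] at this

lemma expVal_pos {P : U → E → E → ℝ} (hP : IsStochastic P) (hC : CondC P)
    (pol : Policy E U) (x : E) (n : ℕ) {f : (Fin (n + 1) → E) → ℝ}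
    (hf : ∀ ω, 0 < f ω) : 0 < expVal P pol x n f := by
  unfold expVal
  apply Finset.sum_pos' (fun ω _ => mul_nonneg (pathProb_nonneg hP pol x n ω) (hf ω).le)
  refine ⟨fun _ => x, Finset.mem_univ _, ?_⟩
  apply mul_pos _ (hf _)
  unfold pathProb
  rw [if_pos rfl, one_mul]
  exact Finset.prod_pos fun i _ => hC _ _ _

lemma abs_rewSum_le {M : ℝ} (hM : ∀ x a, |c x a| ≤ M) (pol : Policy E U) (n : ℕ)
    (ω : Fin (n + 1) → E) : |rewSum c pol (fun _ => 1) n ω| ≤ n * M := by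
  unfold rewSum
  calc |∑ i : Fin n, 1 * c (ω i.castSucc) (act pol ω i)|
      ≤ ∑ i : Fin n, |1 * c (ω i.castSucc) (act pol ω i)| := Finset.abs_sum_le_sum_abs _ _
    _ ≤ ∑ _i : Fin n, M := Finset.sum_le_sum fun i _ => by
        rw [one_mul]; exact hM _ _
    _ = n * M := by simp [mul_comm]

end Aux


section PartA
variable {E U : Type*} [Fintype E] [DecidableEq E] [Fintype U] [Nonempty E] [Nonempty U]
variable {P : U → E → E → ℝ} {c : E → U → ℝ}

set_option linter.unusedSectionVars false

lemma act_update0 (pol : Policy E U) {n : ℕ} (x x' : E) (ω : Fin (n + 1) → E)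
    (h0 : ω 0 = x) (i : Fin n) :
    act (fun k h => pol k (Function.update h 0 x)) (Function.update ω 0 x') i
      = act pol ω i := by
  show pol i.1 _ = pol i.1 _
  congr 1
  funext j
  rcases eq_or_ne j 0 with rfl | hj
  · rw [Function.update_self]
    have hc : (Fin.castLE (Nat.succ_le_succ i.2.le) (0 : Fin (i.1 + 1))) = (0 : Fin (n + 1)) :=
      Fin.ext (by simp)
    rw [hc, h0]
  · rw [Function.update_of_ne hj]
    have hc : (Fin.castLE (Nat.succ_le_succ i.2.le) j) ≠ (0 : Fin (n + 1)) := by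
      simp only [ne_eq, Fin.ext_iff, Fin.coe_castLE, Fin.val_zero]
      exact fun h => hj (Fin.ext h)
    rw [Function.update_of_ne hc]

lemma decompA (hP : IsStochastic P) (pol : Policy E U) (x x' : E) {n : ℕ}
    (ω : Fin (n + 2) → E) (h0 : ω 0 = x) :
    ∃ T R : ℝ, 0 ≤ T ∧
      pathProb P (fun k h => pol k (Function.update h 0 x)) x' (n + 1) (Function.update ω 0 x')
        = P (act pol ω 0) x' (ω (0 : Fin (n + 1)).succ) * T ∧
      pathProb P pol x (n + 1) ω = P (act pol ω 0) x (ω (0 : Fin (n + 1)).succ) * T ∧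
      rewSum c (fun k h => pol k (Function.update h 0 x)) (fun _ => 1) (n + 1)
          (Function.update ω 0 x') = c x' (act pol ω 0) + R ∧
      rewSum c pol (fun _ => 1) (n + 1) ω = c x (act pol ω 0) + R := by
  set ψ := Function.update ω 0 x' with hψdef
  have hψ : ∀ k : Fin (n + 2), k ≠ 0 → ψ k = ω k := fun k hk => Function.update_of_ne hk _ _
  have hcast0 : ((0 : Fin (n + 1)).castSucc) = (0 : Fin (n + 2)) := Fin.ext (by simp)
  have hsucc_ne : ∀ i : Fin (n + 1), (i.succ : Fin (n + 2)) ≠ 0 := fun i => Fin.succ_ne_zero i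
  have hcsucc_ne : ∀ i : Fin n, ((i.succ).castSucc : Fin (n + 2)) ≠ 0 := by
    intro i
    simp only [ne_eq, Fin.ext_iff, Fin.coe_castSucc, Fin.val_succ, Fin.val_zero]
    omega
  have h0' : ψ 0 = x' := Function.update_self _ _ _
  refine ⟨∏ i : Fin n, P (act pol ω i.succ) (ω (i.succ).castSucc) (ω (i.succ).succ),
    ∑ i : Fin n, c (ω (i.succ).castSucc) (act pol ω i.succ),
    Finset.prod_nonneg fun i _ => hP.1 _ _ _, ?_, ?_, ?_, ?_⟩
  · unfold pathProb
    rw [h0', if_pos rfl, one_mul, Fin.prod_univ_succ]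
    congr 1
    · simp only [hψdef, act_update0 pol x x' ω h0, hcast0, h0', hψ _ (hsucc_ne 0), Function.update_self, Function.update_of_ne (hsucc_ne 0)]
    · refine Finset.prod_congr rfl fun i _ => ?_
      simp only [hψdef, act_update0 pol x x' ω h0, hψ _ (hcsucc_ne i), hψ _ (hsucc_ne i.succ), Function.update_of_ne (hcsucc_ne i), Function.update_of_ne (hsucc_ne i.succ)]
  · unfold pathProb
    rw [h0, if_pos rfl, one_mul, Fin.prod_univ_succ]
    congr 1
    rw [hcast0, h0]
  · unfold rewSum
    rw [Fin.sum_univ_succ]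
    congr 1
    · simp only [hψdef, act_update0 pol x x' ω h0, hcast0, h0', one_mul, Function.update_self]
    · refine Finset.sum_congr rfl fun i _ => ?_
      simp only [hψdef, act_update0 pol x x' ω h0, hψ _ (hcsucc_ne i), one_mul, Function.update_of_ne (hcsucc_ne i)]
  · unfold rewSum
    rw [Fin.sum_univ_succ]
    congr 1
    · rw [hcast0, h0]
      simp
    · refine Finset.sum_congr rfl fun i _ => ?_
      rw [one_mul]

/-- Pointwise comparison of the transported term with the original term (upper bound). -/
lemma termA_le (hP : IsStochastic P) {δ M : ℝ} (hδ0 : 0 < δ) (hδ : ∀ a y z, δ ≤ P a y z)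
    (hM : ∀ y a, |c y a| ≤ M) (γ : ℝ) (x x' : E) (pol : Policy E U) (n : ℕ)
    (ω : Fin (n + 1) → E) :
    pathProb P (fun k h => pol k (Function.update h 0 x)) x' n
        (Function.update ω 0 (Equiv.swap x x' (ω 0))) *
      exp (γ * rewSum c (fun k h => pol k (Function.update h 0 x)) (fun _ => 1) n
        (Function.update ω 0 (Equiv.swap x x' (ω 0)))) ≤
    (δ⁻¹ * exp (2 * |γ| * M)) *
      (pathProb P pol x n ω * exp (γ * rewSum c pol (fun _ => 1) n ω)) := by
  have hK : (1 : ℝ) ≤ δ⁻¹ * exp (2 * |γ| * M) := by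
    have h1 : δ ≤ 1 := (hδ (Classical.arbitrary U) (Classical.arbitrary E)
        (Classical.arbitrary E)).trans (P_le_one hP _ _ _)
    have h2 : (1 : ℝ) ≤ δ⁻¹ := by
      rw [le_inv_comm₀ one_pos hδ0]; simpa using h1
    have h3 : (1 : ℝ) ≤ exp (2 * |γ| * M) := by
      rw [Real.one_le_exp_iff]
      have := abs_nonneg γ
      have := (abs_nonneg (c (Classical.arbitrary E) (Classical.arbitrary U))).trans
        (hM (Classical.arbitrary E) (Classical.arbitrary U))
      positivity
    nlinarith
  rcases eq_or_ne (ω 0) x with h0 | h0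
  · -- main case
    rw [h0, Equiv.swap_apply_left]
    cases n with
    | zero =>
      unfold pathProb rewSum
      simp only [Fin.prod_univ_zero, Fin.sum_univ_zero, mul_one, mul_zero, Real.exp_zero]
      rw [Function.update_self, if_pos rfl, h0, if_pos rfl]
      simpa using hK
    | succ m =>
      obtain ⟨T, R, hT, e1, e2, e3, e4⟩ := decompA (c := c) hP pol x x' ω h0
      rw [e1, e2, e3, e4]
      set a₀ := act pol ω 0
      set w := ω (0 : Fin (m + 1)).succ
      have hp1 : P a₀ x' w ≤ δ⁻¹ * P a₀ x w := by
        have : P a₀ x' w ≤ 1 := P_le_one hP _ _ _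
        have h2 : δ⁻¹ * δ = 1 := inv_mul_cancel₀ (ne_of_gt hδ0)
        have h3 : δ⁻¹ * δ ≤ δ⁻¹ * P a₀ x w :=
          mul_le_mul_of_nonneg_left (hδ a₀ x w) (by positivity)
        linarith
      have he : exp (γ * (c x' a₀ + R)) ≤ exp (2 * |γ| * M) * exp (γ * (c x a₀ + R)) := by
        rw [← Real.exp_add, Real.exp_le_exp]
        have h1 : γ * c x' a₀ - γ * c x a₀ ≤ 2 * |γ| * M := by
          have := abs_mul γ (c x' a₀ - c x a₀)
          have h2 : |γ * (c x' a₀ - c x a₀)| ≤ |γ| * (2 * M) := by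
            rw [abs_mul]
            refine mul_le_mul_of_nonneg_left ?_ (abs_nonneg γ)
            calc |c x' a₀ - c x a₀| ≤ |c x' a₀| + |c x a₀| := abs_sub _ _
              _ ≤ M + M := add_le_add (hM _ _) (hM _ _)
              _ = 2 * M := by ring
          have := (abs_le.mp h2).2
          nlinarith [this]
        nlinarith [h1]
      calc P a₀ x' w * T * exp (γ * (c x' a₀ + R))
          ≤ (δ⁻¹ * P a₀ x w) * T * (exp (2 * |γ| * M) * exp (γ * (c x a₀ + R))) := by
            refine mul_le_mul (mul_le_mul_of_nonneg_right hp1 hT) he (Real.exp_pos _).le ?_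
            have := hP.1 a₀ x w
            positivity
        _ = (δ⁻¹ * exp (2 * |γ| * M)) * (P a₀ x w * T * exp (γ * (c x a₀ + R))) := by ring
  · -- off-diagonal: LHS is zero
    have hswap : Equiv.swap x x' (ω 0) ≠ x' := by
      intro h
      have h2 := congrArg (Equiv.swap x x') h
      rw [Equiv.swap_apply_self, Equiv.swap_apply_right] at h2
      exact h0 h2
    have hind : Function.update ω 0 (Equiv.swap x x' (ω 0)) 0 = Equiv.swap x x' (ω 0) :=
      Function.update_self _ _ _
    unfold pathProb
    rw [hind, if_neg hswap, zero_mul, zero_mul]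
    have h1 : (0:ℝ) ≤ pathProb P pol x n ω * exp (γ * rewSum c pol (fun _ => 1) n ω) :=
      mul_nonneg (pathProb_nonneg hP pol x n ω) (Real.exp_pos _).le
    unfold pathProb at h1
    positivity

/-- Pointwise comparison, lower bound. -/
lemma termA_ge (hP : IsStochastic P) {δ M : ℝ} (hδ0 : 0 < δ) (hδ : ∀ a y z, δ ≤ P a y z)
    (hM : ∀ y a, |c y a| ≤ M) (γ : ℝ) (x x' : E) (pol : Policy E U) (n : ℕ)
    (ω : Fin (n + 1) → E) :
    (δ * exp (-(2 * |γ| * M))) *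
      (pathProb P pol x n ω * exp (γ * rewSum c pol (fun _ => 1) n ω)) ≤
    pathProb P (fun k h => pol k (Function.update h 0 x)) x' n
        (Function.update ω 0 (Equiv.swap x x' (ω 0))) *
      exp (γ * rewSum c (fun k h => pol k (Function.update h 0 x)) (fun _ => 1) n
        (Function.update ω 0 (Equiv.swap x x' (ω 0)))) := by
  have hK : δ * exp (-(2 * |γ| * M)) ≤ 1 := by
    have h1 : δ ≤ 1 := (hδ (Classical.arbitrary U) (Classical.arbitrary E)
        (Classical.arbitrary E)).trans (P_le_one hP _ _ _)
    have h3 : exp (-(2 * |γ| * M)) ≤ 1 := by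
      rw [Real.exp_le_one_iff]
      have := abs_nonneg γ
      have := (abs_nonneg (c (Classical.arbitrary E) (Classical.arbitrary U))).trans
        (hM (Classical.arbitrary E) (Classical.arbitrary U))
      nlinarith
    nlinarith [Real.exp_pos (-(2 * |γ| * M))]
  rcases eq_or_ne (ω 0) x with h0 | h0
  · rw [h0, Equiv.swap_apply_left]
    cases n with
    | zero =>
      unfold pathProb rewSum
      simp only [Fin.prod_univ_zero, Fin.sum_univ_zero, mul_one, mul_zero, Real.exp_zero]
      rw [Function.update_self, if_pos rfl, h0, if_pos rfl]
      simpa using hK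
    | succ m =>
      obtain ⟨T, R, hT, e1, e2, e3, e4⟩ := decompA (c := c) hP pol x x' ω h0
      rw [e1, e2, e3, e4]
      set a₀ := act pol ω 0
      set w := ω (0 : Fin (m + 1)).succ
      have hp1 : δ * P a₀ x w ≤ P a₀ x' w := by
        have h1 : P a₀ x w ≤ 1 := P_le_one hP _ _ _
        have h2 := hδ a₀ x' w
        nlinarith
      have he : exp (-(2 * |γ| * M)) * exp (γ * (c x a₀ + R)) ≤ exp (γ * (c x' a₀ + R)) := by
        rw [← Real.exp_add, Real.exp_le_exp]
        have h2 : |γ * (c x a₀ - c x' a₀)| ≤ |γ| * (2 * M) := by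
          rw [abs_mul]
          refine mul_le_mul_of_nonneg_left ?_ (abs_nonneg γ)
          calc |c x a₀ - c x' a₀| ≤ |c x a₀| + |c x' a₀| := abs_sub _ _
            _ ≤ M + M := add_le_add (hM _ _) (hM _ _)
            _ = 2 * M := by ring
        have := (abs_le.mp h2).2
        nlinarith [this]
      calc (δ * exp (-(2 * |γ| * M))) * (P a₀ x w * T * exp (γ * (c x a₀ + R)))
          = (δ * P a₀ x w) * T * (exp (-(2 * |γ| * M)) * exp (γ * (c x a₀ + R))) := by ring
        _ ≤ P a₀ x' w * T * exp (γ * (c x' a₀ + R)) := by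
            refine mul_le_mul (mul_le_mul_of_nonneg_right hp1 hT) he ?_ ?_
            · positivity
            · have h2 := hδ a₀ x' w
              nlinarith [hT]
  · have hswap : Equiv.swap x x' (ω 0) ≠ x' := by
      intro h
      have h2 := congrArg (Equiv.swap x x') h
      rw [Equiv.swap_apply_self, Equiv.swap_apply_right] at h2
      exact h0 h2
    have hind : Function.update ω 0 (Equiv.swap x x' (ω 0)) 0 = Equiv.swap x x' (ω 0) :=
      Function.update_self _ _ _
    unfold pathProb
    rw [hind, if_neg hswap, if_neg h0, zero_mul, zero_mul, zero_mul, zero_mul, mul_zero]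

lemma liminf_le_liminf_of_tendsto_sub {u v : ℕ → ℝ} {C : ℝ}
    (hu1 : ∀ n, u n ≤ C) (hu2 : ∀ n, -C ≤ u n) (hv2 : ∀ n, -C ≤ v n)
    (h : Tendsto (fun n => v n - u n) atTop (𝓝 0)) :
    liminf v atTop ≤ liminf u atTop := by
  refine le_of_forall_pos_le_add fun ε hε => ?_
  have hev : ∀ᶠ n in atTop, v n ≤ u n + ε := by
    filter_upwards [Metric.tendsto_nhds.mp h ε hε] with n hn
    rw [Real.dist_eq, sub_zero] at hn
    have := (abs_lt.mp hn).2
    linarith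
  have h1 : liminf v atTop ≤ liminf (fun n => u n + ε) atTop := by
    have hb1 : IsBoundedUnder (· ≥ ·) atTop v := isBoundedUnder_of ⟨-C, fun n => hv2 n⟩
    have hb2 : IsBoundedUnder (· ≤ ·) atTop (fun n => u n + ε) :=
      isBoundedUnder_of ⟨C + ε, fun n => add_le_add_left (hu1 n) ε⟩
    exact liminf_le_liminf hev hb1 hb2.isCoboundedUnder_ge
  have hb3 : IsBoundedUnder (· ≤ ·) atTop u := isBoundedUnder_of ⟨C, fun n => hu1 n⟩
  have hb4 : IsBoundedUnder (· ≥ ·) atTop u := isBoundedUnder_of ⟨-C, fun n => hu2 n⟩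
  rwa [liminf_add_const atTop u ε hb3.isCoboundedUnder_ge hb4] at h1

lemma liminf_eq_of_tendsto_sub {u v : ℕ → ℝ} {C : ℝ}
    (hu1 : ∀ n, u n ≤ C) (hu2 : ∀ n, -C ≤ u n) (hv1 : ∀ n, v n ≤ C) (hv2 : ∀ n, -C ≤ v n)
    (h : Tendsto (fun n => v n - u n) atTop (𝓝 0)) :
    liminf v atTop = liminf u atTop :=
  le_antisymm (liminf_le_liminf_of_tendsto_sub hu1 hu2 hv2 h)
    (liminf_le_liminf_of_tendsto_sub hv1 hv2 hu2
      (by simpa using h.neg))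

lemma expValA_le (hP : IsStochastic P) {δ M : ℝ} (hδ0 : 0 < δ) (hδ : ∀ a y z, δ ≤ P a y z)
    (hM : ∀ y a, |c y a| ≤ M) (γ : ℝ) (x x' : E) (pol : Policy E U) (n : ℕ) :
    expVal P (fun k h => pol k (Function.update h 0 x)) x' n
      (fun ψ => exp (γ * rewSum c (fun k h => pol k (Function.update h 0 x)) (fun _ => 1) n ψ))
    ≤ (δ⁻¹ * exp (2 * |γ| * M)) *
      expVal P pol x n (fun ω => exp (γ * rewSum c pol (fun _ => 1) n ω)) := by
  unfold expVal
  have hinv : Function.Involutive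
      (fun ω : Fin (n + 1) → E => Function.update ω 0 (Equiv.swap x x' (ω 0))) := by
    intro ω; funext j
    rcases eq_or_ne j 0 with rfl | hj
    · simp
    · simp [Function.update_of_ne hj]
  rw [← Equiv.sum_comp (Function.Involutive.toPerm _ hinv)
    (fun ψ => pathProb P (fun k h => pol k (Function.update h 0 x)) x' n ψ *
      exp (γ * rewSum c (fun k h => pol k (Function.update h 0 x)) (fun _ => 1) n ψ)),
    Finset.mul_sum]
  refine Finset.sum_le_sum fun ω _ => ?_
  exact termA_le hP hδ0 hδ hM γ x x' pol n ω

lemma expValA_ge (hP : IsStochastic P) {δ M : ℝ} (hδ0 : 0 < δ) (hδ : ∀ a y z, δ ≤ P a y z)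
    (hM : ∀ y a, |c y a| ≤ M) (γ : ℝ) (x x' : E) (pol : Policy E U) (n : ℕ) :
    (δ * exp (-(2 * |γ| * M))) *
      expVal P pol x n (fun ω => exp (γ * rewSum c pol (fun _ => 1) n ω))
    ≤ expVal P (fun k h => pol k (Function.update h 0 x)) x' n
      (fun ψ => exp (γ * rewSum c (fun k h => pol k (Function.update h 0 x)) (fun _ => 1) n ψ)) := by
  unfold expVal
  have hinv : Function.Involutive
      (fun ω : Fin (n + 1) → E => Function.update ω 0 (Equiv.swap x x' (ω 0))) := by
    intro ω; funext j
    rcases eq_or_ne j 0 with rfl | hj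
    · simp
    · simp [Function.update_of_ne hj]
  rw [← Equiv.sum_comp (Function.Involutive.toPerm _ hinv)
    (fun ψ => pathProb P (fun k h => pol k (Function.update h 0 x)) x' n ψ *
      exp (γ * rewSum c (fun k h => pol k (Function.update h 0 x)) (fun _ => 1) n ψ)),
    Finset.mul_sum]
  refine Finset.sum_le_sum fun ω _ => ?_
  exact termA_ge hP hδ0 hδ hM γ x x' pol n ω

lemma abs_seq_le (hP : IsStochastic P) {M : ℝ} (hM : ∀ y a, |c y a| ≤ M) (hM0 : 0 ≤ M)
    (γ : ℝ) (y : E) (pol : Policy E U) (n : ℕ) :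
    |(1 / ((n : ℝ) * γ)) * Real.log (expVal P pol y n
      (fun ω => exp (γ * rewSum c pol (fun _ => 1) n ω)))| ≤ M := by
  rcases eq_or_ne γ 0 with rfl | hγ
  · simp [hM0]
  rcases Nat.eq_zero_or_pos n with rfl | hn
  · simp [hM0]
  have hγ' : 0 < |γ| := abs_pos.mpr hγ
  have hn' : (0 : ℝ) < n := by exact_mod_cast hn
  have hub : expVal P pol y n (fun ω => exp (γ * rewSum c pol (fun _ => 1) n ω))
      ≤ exp (|γ| * n * M) := by
    refine expVal_const_bound hP pol y n fun ω => ?_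
    rw [Real.exp_le_exp]
    calc γ * rewSum c pol (fun _ => 1) n ω ≤ |γ * rewSum c pol (fun _ => 1) n ω| := le_abs_self _
      _ = |γ| * |rewSum c pol (fun _ => 1) n ω| := abs_mul _ _
      _ ≤ |γ| * (n * M) := mul_le_mul_of_nonneg_left (abs_rewSum_le hM pol n ω) (abs_nonneg γ)
      _ = |γ| * n * M := by ring
  have hlb : exp (-(|γ| * n * M)) ≤ expVal P pol y n
      (fun ω => exp (γ * rewSum c pol (fun _ => 1) n ω)) := by
    refine expVal_const_lower hP pol y n fun ω => ?_
    rw [Real.exp_le_exp]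
    have h1 : -(γ * rewSum c pol (fun _ => 1) n ω) ≤ |γ| * n * M := by
      calc -(γ * rewSum c pol (fun _ => 1) n ω) ≤ |γ * rewSum c pol (fun _ => 1) n ω| :=
            neg_le_abs _
        _ = |γ| * |rewSum c pol (fun _ => 1) n ω| := abs_mul _ _
        _ ≤ |γ| * (n * M) := mul_le_mul_of_nonneg_left (abs_rewSum_le hM pol n ω) (abs_nonneg γ)
        _ = |γ| * n * M := by ring
    linarith
  have hpos : (0:ℝ) < expVal P pol y n (fun ω => exp (γ * rewSum c pol (fun _ => 1) n ω)) :=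
    lt_of_lt_of_le (Real.exp_pos _) hlb
  have hlog : |Real.log (expVal P pol y n
      (fun ω => exp (γ * rewSum c pol (fun _ => 1) n ω)))| ≤ |γ| * n * M := by
    rw [abs_le]
    constructor
    · have := Real.log_le_log (Real.exp_pos _) hlb
      rwa [Real.log_exp] at this
    · have := Real.log_le_log hpos hub
      rwa [Real.log_exp] at this
  calc |(1 / ((n : ℝ) * γ)) * Real.log (expVal P pol y n
        (fun ω => exp (γ * rewSum c pol (fun _ => 1) n ω)))|
      = (1 / ((n : ℝ) * |γ|)) * |Real.log (expVal P pol y n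
        (fun ω => exp (γ * rewSum c pol (fun _ => 1) n ω)))| := by
        rw [abs_mul, abs_div, abs_one, abs_mul, Nat.abs_cast]
    _ ≤ (1 / ((n : ℝ) * |γ|)) * (|γ| * n * M) := by
        exact mul_le_mul_of_nonneg_left hlog
          (one_div_nonneg.mpr (mul_nonneg (Nat.cast_nonneg n) (abs_nonneg γ)))
    _ = M := by field_simp

lemma JavgA (hP : IsStochastic P) (hC : CondC P) {δ M : ℝ} (hδ0 : 0 < δ)
    (hδ : ∀ a y z, δ ≤ P a y z) (hM : ∀ y a, |c y a| ≤ M) (hM0 : 0 ≤ M)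
    {γ : ℝ} (hγ : γ ≠ 0) (x x' : E) (pol : Policy E U) :
    Javg P c γ x' (fun k h => pol k (Function.update h 0 x)) = Javg P c γ x pol := by
  unfold Javg
  rw [if_neg hγ, if_neg hγ]
  set F : ℕ → ℝ := fun n => expVal P pol x n
    (fun ω => exp (γ * rewSum c pol (fun _ => 1) n ω)) with hF
  set F' : ℕ → ℝ := fun n => expVal P (fun k h => pol k (Function.update h 0 x)) x' n
    (fun ψ => exp (γ * rewSum c (fun k h => pol k (Function.update h 0 x)) (fun _ => 1) n ψ))
    with hF'
  have hFpos : ∀ n, 0 < F n := fun n =>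
    expVal_pos hP hC pol x n (fun ω => Real.exp_pos _)
  have hF'pos : ∀ n, 0 < F' n := fun n =>
    expVal_pos hP hC _ x' n (fun ω => Real.exp_pos _)
  set K₂ : ℝ := δ⁻¹ * exp (2 * |γ| * M) with hK₂
  set K₁ : ℝ := δ * exp (-(2 * |γ| * M)) with hK₁
  have hK₁0 : 0 < K₁ := by positivity
  have hK₂0 : 0 < K₂ := by positivity
  have hle : ∀ n, F' n ≤ K₂ * F n := fun n => expValA_le hP hδ0 hδ hM γ x x' pol n
  have hge : ∀ n, K₁ * F n ≤ F' n := fun n => expValA_ge hP hδ0 hδ hM γ x x' pol n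
  set L : ℝ := max |Real.log K₁| |Real.log K₂| with hL
  have hlogdiff : ∀ n, |Real.log (F' n) - Real.log (F n)| ≤ L := by
    intro n
    have h1 : Real.log (F' n) ≤ Real.log K₂ + Real.log (F n) := by
      have := Real.log_le_log (hF'pos n) (hle n)
      rwa [Real.log_mul (ne_of_gt hK₂0) (ne_of_gt (hFpos n))] at this
    have h2 : Real.log K₁ + Real.log (F n) ≤ Real.log (F' n) := by
      have := Real.log_le_log (mul_pos hK₁0 (hFpos n)) (hge n)
      rwa [Real.log_mul (ne_of_gt hK₁0) (ne_of_gt (hFpos n))] at this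
    rw [abs_le]
    constructor
    · have := neg_abs_le (Real.log K₁)
      have hL1 : |Real.log K₁| ≤ L := le_max_left _ _
      linarith
    · have := le_abs_self (Real.log K₂)
      have hL2 : |Real.log K₂| ≤ L := le_max_right _ _
      linarith
  have hdiff : ∀ n : ℕ, ‖(1 / ((n : ℝ) * γ)) * Real.log (F' n)
      - (1 / ((n : ℝ) * γ)) * Real.log (F n)‖ ≤ (L / |γ|) / n := by
    intro n
    rcases Nat.eq_zero_or_pos n with rfl | hn
    · simp only [Nat.cast_zero, zero_mul, div_zero, sub_self, norm_zero, le_refl]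
    have hn' : (0 : ℝ) < n := by exact_mod_cast hn
    have hγ' : 0 < |γ| := abs_pos.mpr hγ
    rw [Real.norm_eq_abs, ← mul_sub, abs_mul, abs_div, abs_one, abs_mul, Nat.abs_cast]
    calc 1 / ((n:ℝ) * |γ|) * |Real.log (F' n) - Real.log (F n)|
        ≤ 1 / ((n:ℝ) * |γ|) * L := mul_le_mul_of_nonneg_left (hlogdiff n)
          (one_div_nonneg.mpr (mul_nonneg (Nat.cast_nonneg n) (abs_nonneg γ)))
      _ = (L / |γ|) / n := by
          rw [one_div, inv_mul_eq_div, div_div, mul_comm ((n:ℝ)) |γ|]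
  have htend : Tendsto (fun n : ℕ => (1 / ((n : ℝ) * γ)) * Real.log (F' n)
      - (1 / ((n : ℝ) * γ)) * Real.log (F n)) atTop (𝓝 0) :=
    squeeze_zero_norm hdiff (tendsto_const_div_atTop_nhds_zero_nat (L / |γ|))
  refine liminf_eq_of_tendsto_sub (C := M) ?_ ?_ ?_ ?_ htend
  · intro n; exact (abs_le.mp (abs_seq_le hP hM hM0 γ x pol n)).2
  · intro n; exact (abs_le.mp (abs_seq_le hP hM hM0 γ x pol n)).1
  · intro n; exact (abs_le.mp (abs_seq_le hP hM hM0 γ x' _ n)).2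
  · intro n; exact (abs_le.mp (abs_seq_le hP hM hM0 γ x' _ n)).1

end PartA


section PartB
variable {E U : Type*} [Fintype E] [DecidableEq E] [Fintype U] [Nonempty E] [Nonempty U]
variable {P : U → E → E → ℝ} {c : E → U → ℝ}

set_option linter.unusedSectionVars false

/-- The average-reward Bellman operator. -/
noncomputable def Tstep (P : U → E → E → ℝ) (c : E → U → ℝ) (v : E → ℝ) : E → ℝ :=
  fun z => ⨆ a : U, (c z a + ∑ y, P a z y * v y)

noncomputable def Mx (f : E → ℝ) : ℝ := ⨆ z, f z
noncomputable def mn (f : E → ℝ) : ℝ := ⨅ z, f z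

lemma le_Mx (f : E → ℝ) (z : E) : f z ≤ Mx f :=
  le_ciSup (Set.Finite.bddAbove (Set.finite_range f)) z

lemma mn_le (f : E → ℝ) (z : E) : mn f ≤ f z :=
  ciInf_le (Set.Finite.bddBelow (Set.finite_range f)) z

lemma mn_le_Mx (f : E → ℝ) : mn f ≤ Mx f :=
  (mn_le f (Classical.arbitrary E)).trans (le_Mx f _)

lemma exists_Mx (f : E → ℝ) : ∃ z, Mx f = f z := by
  obtain ⟨z, hz⟩ := Finite.exists_max f
  exact ⟨z, le_antisymm (ciSup_le hz) (le_Mx f z)⟩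

lemma exists_mn (f : E → ℝ) : ∃ z, mn f = f z := by
  obtain ⟨z, hz⟩ := Finite.exists_min f
  exact ⟨z, le_antisymm (mn_le f z) (le_ciInf hz)⟩

lemma le_Tstep (v : E → ℝ) (z : E) (a : U) :
    c z a + ∑ y, P a z y * v y ≤ Tstep P c v z := by
  unfold Tstep
  exact le_ciSup (f := fun a : U => c z a + ∑ y, P a z y * v y)
    (Set.Finite.bddAbove (Set.finite_range _)) a

lemma Tstep_exists_max (v : E → ℝ) (z : E) :
    ∃ a : U, Tstep P c v z = c z a + ∑ y, P a z y * v y := by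
  obtain ⟨a, ha⟩ := Finite.exists_max (fun a : U => c z a + ∑ y, P a z y * v y)
  exact ⟨a, le_antisymm (ciSup_le ha) (le_Tstep v z a)⟩

lemma dobrushin {δ : ℝ} (μ ν : E → ℝ) (hμδ : ∀ z, δ ≤ μ z) (hνδ : ∀ z, δ ≤ ν z)
    (hμ1 : ∑ z, μ z = 1) (hν1 : ∑ z, ν z = 1) (f : E → ℝ) :
    ∑ z, μ z * f z - ∑ z, ν z * f z
      ≤ (1 - (Fintype.card E : ℝ) * δ) * (Mx f - mn f) := by
  set m : E → ℝ := fun z => min (μ z) (ν z) with hm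
  set s : ℝ := ∑ z, m z with hs
  have hsδ : (Fintype.card E : ℝ) * δ ≤ s := by
    rw [hs]
    calc (Fintype.card E : ℝ) * δ = ∑ _z : E, δ := by
          rw [Finset.sum_const, Finset.card_univ, nsmul_eq_mul]
      _ ≤ ∑ z, m z := Finset.sum_le_sum fun z _ => le_min (hμδ z) (hνδ z)
  have hs1 : s ≤ 1 := by
    rw [hs, ← hμ1]
    exact Finset.sum_le_sum fun z _ => min_le_left _ _
  have key : ∑ z, μ z * f z - ∑ z, ν z * f z
      = ∑ z, (μ z - m z) * f z - ∑ z, (ν z - m z) * f z := by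
    rw [← Finset.sum_sub_distrib, ← Finset.sum_sub_distrib]
    refine Finset.sum_congr rfl fun z _ => ?_
    ring
  have h1 : ∑ z, (μ z - m z) * f z ≤ (1 - s) * Mx f := by
    calc ∑ z, (μ z - m z) * f z ≤ ∑ z, (μ z - m z) * Mx f :=
          Finset.sum_le_sum fun z _ =>
            mul_le_mul_of_nonneg_left (le_Mx f z) (by simp [hm, min_le_left])
      _ = (1 - s) * Mx f := by
          rw [← Finset.sum_mul, Finset.sum_sub_distrib, hμ1]
  have h2 : (1 - s) * mn f ≤ ∑ z, (ν z - m z) * f z := by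
    calc (1 - s) * mn f = ∑ z, (ν z - m z) * mn f := by
          rw [← Finset.sum_mul, Finset.sum_sub_distrib, hν1]
      _ ≤ ∑ z, (ν z - m z) * f z :=
          Finset.sum_le_sum fun z _ =>
            mul_le_mul_of_nonneg_left (mn_le f z) (by simp [hm, min_le_right])
  have hspan : 0 ≤ Mx f - mn f := sub_nonneg.mpr (mn_le_Mx f)
  have h3 : ∑ z, μ z * f z - ∑ z, ν z * f z ≤ (1 - s) * (Mx f - mn f) := by
    rw [key]; nlinarith
  calc ∑ z, μ z * f z - ∑ z, ν z * f z ≤ (1 - s) * (Mx f - mn f) := h3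
    _ ≤ (1 - (Fintype.card E : ℝ) * δ) * (Mx f - mn f) := by nlinarith

lemma Tstep_contract (hP : IsStochastic P) {δ : ℝ} (hδ : ∀ a y z, δ ≤ P a y z)
    (v w : E → ℝ) (z z' : E) :
    (Tstep P c v z - Tstep P c w z) - (Tstep P c v z' - Tstep P c w z')
      ≤ (1 - (Fintype.card E : ℝ) * δ) * (Mx (v - w) - mn (v - w)) := by
  obtain ⟨a, ha⟩ := Tstep_exists_max (P := P) (c := c) v z
  obtain ⟨b, hb⟩ := Tstep_exists_max (P := P) (c := c) w z'
  have h1 : Tstep P c v z - Tstep P c w z ≤ ∑ y, P a z y * (v y - w y) := by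
    have h2 := le_Tstep (P := P) (c := c) w z a
    have h3 : ∑ y, P a z y * (v y - w y) = ∑ y, P a z y * v y - ∑ y, P a z y * w y := by
      rw [← Finset.sum_sub_distrib]
      exact Finset.sum_congr rfl fun y _ => by ring
    rw [h3]
    linarith [ha, h2]
  have h4 : ∑ y, P b z' y * (v y - w y) ≤ Tstep P c v z' - Tstep P c w z' := by
    have h2 := le_Tstep (P := P) (c := c) v z' b
    have h3 : ∑ y, P b z' y * (v y - w y) = ∑ y, P b z' y * v y - ∑ y, P b z' y * w y := by
      rw [← Finset.sum_sub_distrib]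
      exact Finset.sum_congr rfl fun y _ => by ring
    rw [h3]
    linarith [hb, h2]
  have h5 := dobrushin (P a z) (P b z') (fun y => hδ a z y) (fun y => hδ b z' y)
    (hP.2 a z) (hP.2 b z') (v - w)
  simp only [Pi.sub_apply] at h5
  linarith [h1, h4, h5]

noncomputable def vseq (P : U → E → E → ℝ) (c : E → U → ℝ) : ℕ → E → ℝ :=
  fun N => (Tstep P c)^[N] (fun _ => 0)

noncomputable def dseq (P : U → E → E → ℝ) (c : E → U → ℝ) (N : ℕ) : E → ℝ :=
  fun z => vseq P c (N + 1) z - vseq P c N z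

lemma Tstep_vseq (N : ℕ) : Tstep P c (vseq P c N) = vseq P c (N + 1) := by
  unfold vseq
  rw [Function.iterate_succ_apply']

lemma span_dseq_succ_le (hP : IsStochastic P) {δ : ℝ} (hδ : ∀ a y z, δ ≤ P a y z) (N : ℕ) :
    Mx (dseq P c (N + 1)) - mn (dseq P c (N + 1))
      ≤ (1 - (Fintype.card E : ℝ) * δ) * (Mx (dseq P c N) - mn (dseq P c N)) := by
  obtain ⟨zM, hzM⟩ := exists_Mx (dseq P c (N + 1))
  obtain ⟨zm, hzm⟩ := exists_mn (dseq P c (N + 1))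
  rw [hzM, hzm]
  have hsub : vseq P c (N + 1) - vseq P c N = dseq P c N := rfl
  have h := Tstep_contract (c := c) hP hδ (vseq P c (N + 1)) (vseq P c N) zM zm
  rw [hsub] at h
  have h2 : ∀ z, dseq P c (N + 1) z
      = Tstep P c (vseq P c (N + 1)) z - Tstep P c (vseq P c N) z := by
    intro z
    unfold dseq
    rw [Tstep_vseq, Tstep_vseq]
  rw [h2 zM, h2 zm]
  exact h

lemma span_dseq_pow (hP : IsStochastic P) {δ : ℝ} (hδ : ∀ a y z, δ ≤ P a y z)
    (hβ0 : 0 ≤ 1 - (Fintype.card E : ℝ) * δ) (N : ℕ) :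
    Mx (dseq P c N) - mn (dseq P c N)
      ≤ (1 - (Fintype.card E : ℝ) * δ) ^ N * (Mx (dseq P c 0) - mn (dseq P c 0)) := by
  induction N with
  | zero => simp
  | succ N ih =>
    calc Mx (dseq P c (N + 1)) - mn (dseq P c (N + 1))
        ≤ (1 - (Fintype.card E : ℝ) * δ) * (Mx (dseq P c N) - mn (dseq P c N)) :=
          span_dseq_succ_le hP hδ N
      _ ≤ (1 - (Fintype.card E : ℝ) * δ) *
            ((1 - (Fintype.card E : ℝ) * δ) ^ N * (Mx (dseq P c 0) - mn (dseq P c 0))) :=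
          mul_le_mul_of_nonneg_left ih hβ0
      _ = (1 - (Fintype.card E : ℝ) * δ) ^ (N + 1) * (Mx (dseq P c 0) - mn (dseq P c 0)) := by
          ring

lemma exists_approx_bellman (hP : IsStochastic P) {δ : ℝ} (hδ0 : 0 < δ)
    (hδ : ∀ a y z, δ ≤ P a y z) {ε : ℝ} (hε : 0 < ε) :
    ∃ (h : E → ℝ) (g : ℝ) (u : E → U),
      (∀ z a, c z a + ∑ y, P a z y * h y ≤ h z + g + ε) ∧
      (∀ z, h z + g - ε ≤ c z (u z) + ∑ y, P (u z) z y * h y) := by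
  set β : ℝ := 1 - (Fintype.card E : ℝ) * δ with hβ
  have hβ0 : 0 ≤ β := by
    have h1 : (Fintype.card E : ℝ) * δ = ∑ _z : E, δ := by
      rw [Finset.sum_const, Finset.card_univ, nsmul_eq_mul]
    have h2 : ∑ _z : E, δ ≤ ∑ z : E, P (Classical.arbitrary U) (Classical.arbitrary E) z :=
      Finset.sum_le_sum fun z _ => hδ _ _ z
    rw [hβ]
    rw [hP.2 (Classical.arbitrary U) (Classical.arbitrary E)] at h2
    linarith [h1 ▸ h2]
  have hβ1 : β < 1 := by
    have : (0 : ℝ) < (Fintype.card E : ℝ) * δ := by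
      have := Fintype.card_pos (α := E)
      have hc : (0:ℝ) < (Fintype.card E : ℝ) := by exact_mod_cast this
      positivity
    rw [hβ]; linarith
  -- choose N with β ^ N * span (dseq 0) ≤ ε
  have htend : Tendsto (fun N : ℕ => β ^ N * (Mx (dseq P c 0) - mn (dseq P c 0)))
      atTop (𝓝 0) := by
    have := tendsto_pow_atTop_nhds_zero_of_lt_one hβ0 hβ1
    simpa using this.mul_const (Mx (dseq P c 0) - mn (dseq P c 0))
  obtain ⟨N, hN⟩ := (htend.eventually (eventually_le_nhds hε)).exists
  refine ⟨vseq P c N, dseq P c N (Classical.arbitrary E),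
    fun z => Classical.choose (Tstep_exists_max (P := P) (c := c) (vseq P c N) z), ?_, ?_⟩
  · intro z a
    have h1 : c z a + ∑ y, P a z y * vseq P c N y ≤ Tstep P c (vseq P c N) z :=
      le_Tstep _ z a
    have h2 : Tstep P c (vseq P c N) z - vseq P c N z = dseq P c N z := by
      rw [Tstep_vseq]; rfl
    have h3 : dseq P c N z - dseq P c N (Classical.arbitrary E)
        ≤ Mx (dseq P c N) - mn (dseq P c N) :=
      sub_le_sub (le_Mx _ _) (mn_le _ _)
    have h4 := (span_dseq_pow hP hδ hβ0 N).trans hN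
    linarith
  · intro z
    have hch := Classical.choose_spec (Tstep_exists_max (P := P) (c := c) (vseq P c N) z)
    have h2 : Tstep P c (vseq P c N) z - vseq P c N z = dseq P c N z := by
      rw [Tstep_vseq]; rfl
    have h3 : dseq P c N (Classical.arbitrary E) - dseq P c N z
        ≤ Mx (dseq P c N) - mn (dseq P c N) :=
      sub_le_sub (le_Mx _ _) (mn_le _ _)
    have h4 := (span_dseq_pow hP hδ hβ0 N).trans hN
    linarith [hch]

lemma expVal_add (pol : Policy E U) (x : E) (n : ℕ) (f g : (Fin (n + 1) → E) → ℝ) :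
    expVal P pol x n (fun ω => f ω + g ω) = expVal P pol x n f + expVal P pol x n g := by
  unfold expVal
  rw [← Finset.sum_add_distrib]
  exact Finset.sum_congr rfl fun ω _ => by ring

lemma expVal_add_const (hP : IsStochastic P) (pol : Policy E U) (x : E) (n : ℕ)
    (A : (Fin (n + 1) → E) → ℝ) (k : ℝ) :
    ∑ ω : Fin (n + 1) → E, pathProb P pol x n ω * (A ω + k) = expVal P pol x n A + k := by
  unfold expVal
  have h1 : ∑ ω : Fin (n + 1) → E, pathProb P pol x n ω * k = k := by
    rw [← Finset.sum_mul, sum_pathProb hP, one_mul]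
  calc ∑ ω : Fin (n + 1) → E, pathProb P pol x n ω * (A ω + k)
      = ∑ ω : Fin (n + 1) → E,
          (pathProb P pol x n ω * A ω + pathProb P pol x n ω * k) :=
        Finset.sum_congr rfl fun ω _ => by ring
    _ = (∑ ω : Fin (n + 1) → E, pathProb P pol x n ω * A ω)
        + ∑ ω : Fin (n + 1) → E, pathProb P pol x n ω * k := Finset.sum_add_distrib
    _ = _ := by rw [h1]

lemma verify_upper (hP : IsStochastic P) {h : E → ℝ} {g ε : ℝ}
    (hB : ∀ z a, c z a + ∑ y, P a z y * h y ≤ h z + g + ε) (pol : Policy E U) (x : E) :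
    ∀ n : ℕ, expVal P pol x n
        (fun ω => rewSum c pol (fun _ => 1) n ω + h (ω (Fin.last n)))
      ≤ n * (g + ε) + h x := by
  intro n
  induction n with
  | zero =>
    rw [expVal_zero]
    unfold rewSum
    simp
  | succ n ih =>
    rw [expVal_succ]
    have inner : ∀ ω : Fin (n + 1) → E,
        (∑ y, P (pol n ω) (ω (Fin.last n)) y *
          (rewSum c pol (fun _ => 1) (n + 1) (Fin.snoc ω y)
            + h ((Fin.snoc ω y : Fin (n + 2) → E) (Fin.last (n + 1)))))
        ≤ rewSum c pol (fun _ => 1) n ω + h (ω (Fin.last n)) + (g + ε) := by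
      intro ω
      have hz := hB (ω (Fin.last n)) (pol n ω)
      calc ∑ y, P (pol n ω) (ω (Fin.last n)) y *
            (rewSum c pol (fun _ => 1) (n + 1) (Fin.snoc ω y)
              + h ((Fin.snoc ω y : Fin (n + 2) → E) (Fin.last (n + 1))))
          = ∑ y, (P (pol n ω) (ω (Fin.last n)) y *
              (rewSum c pol (fun _ => 1) n ω + c (ω (Fin.last n)) (pol n ω))
            + P (pol n ω) (ω (Fin.last n)) y * h y) := by
            refine Finset.sum_congr rfl fun y _ => ?_
            rw [rewSum_snoc, Fin.snoc_last]
            ring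
        _ = (rewSum c pol (fun _ => 1) n ω + c (ω (Fin.last n)) (pol n ω))
            + ∑ y, P (pol n ω) (ω (Fin.last n)) y * h y := by
            rw [Finset.sum_add_distrib, ← Finset.sum_mul, hP.2, one_mul]
        _ ≤ rewSum c pol (fun _ => 1) n ω + h (ω (Fin.last n)) + (g + ε) := by linarith
    calc ∑ ω : Fin (n + 1) → E, pathProb P pol x n ω *
          ∑ y, P (pol n ω) (ω (Fin.last n)) y *
            (rewSum c pol (fun _ => 1) (n + 1) (Fin.snoc ω y)
              + h ((Fin.snoc ω y : Fin (n + 2) → E) (Fin.last (n + 1))))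
        ≤ ∑ ω : Fin (n + 1) → E, pathProb P pol x n ω *
            ((rewSum c pol (fun _ => 1) n ω + h (ω (Fin.last n))) + (g + ε)) :=
          Finset.sum_le_sum fun ω _ => mul_le_mul_of_nonneg_left (inner ω)
            (pathProb_nonneg hP pol x n ω)
      _ = expVal P pol x n (fun ω => rewSum c pol (fun _ => 1) n ω + h (ω (Fin.last n)))
          + (g + ε) :=
          expVal_add_const hP pol x n _ (g + ε)
      _ ≤ (n * (g + ε) + h x) + (g + ε) := by linarith [ih]
      _ = (n + 1 : ℕ) * (g + ε) + h x := by push_cast; ring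

lemma verify_lower (hP : IsStochastic P) {h : E → ℝ} {g ε : ℝ} {u : E → U}
    (hB : ∀ z, h z + g - ε ≤ c z (u z) + ∑ y, P (u z) z y * h y) (x : E) :
    ∀ n : ℕ, (n : ℝ) * (g - ε) + h x ≤ expVal P (stationaryPolicy u) x n
        (fun ω => rewSum c (stationaryPolicy u) (fun _ => 1) n ω + h (ω (Fin.last n))) := by
  intro n
  induction n with
  | zero =>
    rw [expVal_zero]
    unfold rewSum
    simp
  | succ n ih =>
    rw [expVal_succ]
    have hact : ∀ ω : Fin (n + 1) → E, (stationaryPolicy u) n ω = u (ω (Fin.last n)) :=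
      fun ω => rfl
    have inner : ∀ ω : Fin (n + 1) → E,
        rewSum c (stationaryPolicy u) (fun _ => 1) n ω + h (ω (Fin.last n)) + (g - ε)
        ≤ (∑ y, P ((stationaryPolicy u) n ω) (ω (Fin.last n)) y *
          (rewSum c (stationaryPolicy u) (fun _ => 1) (n + 1) (Fin.snoc ω y)
            + h ((Fin.snoc ω y : Fin (n + 2) → E) (Fin.last (n + 1))))) := by
      intro ω
      have hz := hB (ω (Fin.last n))
      calc rewSum c (stationaryPolicy u) (fun _ => 1) n ω + h (ω (Fin.last n)) + (g - ε)
          ≤ (rewSum c (stationaryPolicy u) (fun _ => 1) n ω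
              + c (ω (Fin.last n)) (u (ω (Fin.last n))))
            + ∑ y, P (u (ω (Fin.last n))) (ω (Fin.last n)) y * h y := by linarith
        _ = ∑ y, (P (u (ω (Fin.last n))) (ω (Fin.last n)) y *
              (rewSum c (stationaryPolicy u) (fun _ => 1) n ω
                + c (ω (Fin.last n)) (u (ω (Fin.last n))))
            + P (u (ω (Fin.last n))) (ω (Fin.last n)) y * h y) := by
            rw [Finset.sum_add_distrib, ← Finset.sum_mul, hP.2, one_mul]
        _ = ∑ y, P ((stationaryPolicy u) n ω) (ω (Fin.last n)) y *
            (rewSum c (stationaryPolicy u) (fun _ => 1) (n + 1) (Fin.snoc ω y)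
              + h ((Fin.snoc ω y : Fin (n + 2) → E) (Fin.last (n + 1)))) := by
            refine Finset.sum_congr rfl fun y _ => ?_
            rw [rewSum_snoc, Fin.snoc_last, hact]
            ring
    calc ((n + 1 : ℕ) : ℝ) * (g - ε) + h x = ((n : ℝ) * (g - ε) + h x) + (g - ε) := by
          push_cast; ring
      _ ≤ expVal P (stationaryPolicy u) x n
            (fun ω => rewSum c (stationaryPolicy u) (fun _ => 1) n ω + h (ω (Fin.last n)))
          + (g - ε) := by linarith [ih]
      _ = ∑ ω : Fin (n + 1) → E, pathProb P (stationaryPolicy u) x n ω *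
            ((rewSum c (stationaryPolicy u) (fun _ => 1) n ω + h (ω (Fin.last n))) + (g - ε)) :=
          (expVal_add_const hP (stationaryPolicy u) x n _ (g - ε)).symm
      _ ≤ ∑ ω : Fin (n + 1) → E, pathProb P (stationaryPolicy u) x n ω *
          ∑ y, P ((stationaryPolicy u) n ω) (ω (Fin.last n)) y *
            (rewSum c (stationaryPolicy u) (fun _ => 1) (n + 1) (Fin.snoc ω y)
              + h ((Fin.snoc ω y : Fin (n + 2) → E) (Fin.last (n + 1)))) :=
          Finset.sum_le_sum fun ω _ => mul_le_mul_of_nonneg_left (inner ω)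
            (pathProb_nonneg hP (stationaryPolicy u) x n ω)

lemma abs_avg_le (hP : IsStochastic P) {M : ℝ} (hM : ∀ y a, |c y a| ≤ M) (hM0 : 0 ≤ M)
    (y : E) (pol : Policy E U) (n : ℕ) :
    |(1 / (n : ℝ)) * expVal P pol y n (rewSum c pol (fun _ => 1) n)| ≤ M := by
  rcases Nat.eq_zero_or_pos n with rfl | hn
  · simp [hM0]
  have hn' : (0 : ℝ) < n := by exact_mod_cast hn
  have hub : expVal P pol y n (rewSum c pol (fun _ => 1) n) ≤ n * M :=
    expVal_const_bound hP pol y n fun ω => (abs_le.mp (abs_rewSum_le hM pol n ω)).2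
  have hlb : -(n * M) ≤ expVal P pol y n (rewSum c pol (fun _ => 1) n) :=
    expVal_const_lower hP pol y n fun ω => (abs_le.mp (abs_rewSum_le hM pol n ω)).1
  rw [abs_mul, abs_div, abs_one, Nat.abs_cast]
  have habs : |expVal P pol y n (rewSum c pol (fun _ => 1) n)| ≤ n * M :=
    abs_le.mpr ⟨hlb, hub⟩
  calc (1 / (n : ℝ)) * |expVal P pol y n (rewSum c pol (fun _ => 1) n)|
      ≤ (1 / (n : ℝ)) * ((n : ℝ) * M) :=
        mul_le_mul_of_nonneg_left habs (by positivity)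
    _ = M := by field_simp

lemma div_nat_le_abs (K : ℝ) (n : ℕ) : K / (n : ℝ) ≤ |K| := by
  rcases Nat.eq_zero_or_pos n with rfl | hn
  · simp [abs_nonneg]
  have hn' : (1 : ℝ) ≤ n := by exact_mod_cast hn
  calc K / (n : ℝ) ≤ |K| / (n : ℝ) := by
        gcongr
        exact le_abs_self K
    _ ≤ |K| := div_le_self (abs_nonneg K) hn'

lemma neg_abs_le_div_nat (K : ℝ) (n : ℕ) : -|K| ≤ K / (n : ℝ) := by
  have := div_nat_le_abs (-K) n
  rw [neg_div, abs_neg] at this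
  linarith

lemma javg0_bounds (hP : IsStochastic P) {δ M : ℝ} (hδ0 : 0 < δ)
    (hδ : ∀ a y z, δ ≤ P a y z) (hM : ∀ y a, |c y a| ≤ M) (hM0 : 0 ≤ M)
    {ε : ℝ} (hε : 0 < ε) :
    ∃ g : ℝ, ∀ y : E, (∀ pol : Policy E U, Javg P c 0 y pol ≤ g + ε)
      ∧ (∃ pol : Policy E U, g - ε ≤ Javg P c 0 y pol) := by
  obtain ⟨h, g, u, hup, hlo⟩ := exists_approx_bellman (c := c) hP hδ0 hδ hε
  obtain ⟨H0, hH0⟩ := Finite.exists_le fun z : E => |h z|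
  set H := max H0 0 with hH
  have hHnn : (0:ℝ) ≤ H := le_max_right _ _
  have habs : ∀ z, |h z| ≤ H := fun z => (hH0 z).trans (le_max_left _ _)
  refine ⟨g, fun y => ⟨?_, ?_⟩⟩
  · intro pol
    unfold Javg
    rw [if_pos rfl]
    have hseq : ∀ n : ℕ, 1 ≤ n →
        (1 / (n:ℝ)) * expVal P pol y n (rewSum c pol (fun _ => 1) n)
          ≤ (g + ε) + (h y + H) / n := by
      intro n hn
      have hn' : (0:ℝ) < n := by exact_mod_cast hn
      have hvu := verify_upper hP hup pol y n
      have hEadd := expVal_add (P := P) pol y n (rewSum c pol (fun _ => 1) n)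
        (fun ω => h (ω (Fin.last n)))
      have hEh : -H ≤ expVal P pol y n (fun ω => h (ω (Fin.last n))) :=
        expVal_const_lower hP pol y n fun ω => (abs_le.mp (habs _)).1
      have hE : expVal P pol y n (rewSum c pol (fun _ => 1) n)
          ≤ (n:ℝ) * (g + ε) + (h y + H) := by
        have := hvu
        rw [show (fun ω : Fin (n+1) → E => rewSum c pol (fun _ => 1) n ω
            + h (ω (Fin.last n))) = (fun ω => (rewSum c pol (fun _ => 1) n) ω
            + (fun ω : Fin (n+1) → E => h (ω (Fin.last n))) ω) from rfl, hEadd] at this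
        linarith
      calc (1 / (n:ℝ)) * expVal P pol y n (rewSum c pol (fun _ => 1) n)
          ≤ (1 / (n:ℝ)) * ((n:ℝ) * (g + ε) + (h y + H)) :=
            mul_le_mul_of_nonneg_left hE (by positivity)
        _ = (g + ε) + (h y + H) / n := by field_simp
    have htarget : Tendsto (fun n : ℕ => (g + ε) + (h y + H) / n) atTop (𝓝 (g + ε)) := by
      have := (tendsto_const_nhds :
          Tendsto (fun _ : ℕ => g + ε) atTop (𝓝 (g + ε))).add
        (tendsto_const_div_atTop_nhds_zero_nat (h y + H))
      simpa using this
    have hlim : liminf (fun n : ℕ =>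
        (1 / (n:ℝ)) * expVal P pol y n (rewSum c pol (fun _ => 1) n)) atTop
        ≤ liminf (fun n : ℕ => (g + ε) + (h y + H) / n) atTop := by
      refine liminf_le_liminf (eventually_atTop.mpr ⟨1, hseq⟩) ?_ ?_
      · exact isBoundedUnder_of ⟨-M, fun n =>
          (abs_le.mp (abs_avg_le hP hM hM0 y pol n)).1⟩
      · exact (isBoundedUnder_of (⟨(g + ε) + |h y + H|, fun n =>
          add_le_add_right (div_nat_le_abs _ n) _⟩ :
            ∃ b, ∀ n : ℕ, (g + ε) + (h y + H) / n ≤ b)).isCoboundedUnder_ge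
    rwa [htarget.liminf_eq] at hlim
  · refine ⟨stationaryPolicy u, ?_⟩
    unfold Javg
    rw [if_pos rfl]
    have hseq : ∀ n : ℕ, 1 ≤ n →
        (g - ε) + (h y - H) / n ≤ (1 / (n:ℝ)) * expVal P (stationaryPolicy u) y n
          (rewSum c (stationaryPolicy u) (fun _ => 1) n) := by
      intro n hn
      have hn' : (0:ℝ) < n := by exact_mod_cast hn
      have hvl := verify_lower hP hlo y n
      have hEadd := expVal_add (P := P) (stationaryPolicy u) y n
        (rewSum c (stationaryPolicy u) (fun _ => 1) n) (fun ω => h (ω (Fin.last n)))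
      have hEh : expVal P (stationaryPolicy u) y n (fun ω => h (ω (Fin.last n))) ≤ H :=
        expVal_const_bound hP (stationaryPolicy u) y n fun ω => (abs_le.mp (habs _)).2
      have hE : (n:ℝ) * (g - ε) + (h y - H)
          ≤ expVal P (stationaryPolicy u) y n (rewSum c (stationaryPolicy u) (fun _ => 1) n) := by
        have := hvl
        rw [show (fun ω : Fin (n+1) → E => rewSum c (stationaryPolicy u) (fun _ => 1) n ω
            + h (ω (Fin.last n))) = (fun ω => (rewSum c (stationaryPolicy u) (fun _ => 1) n) ω
            + (fun ω : Fin (n+1) → E => h (ω (Fin.last n))) ω) from rfl, hEadd] at this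
        linarith
      calc (g - ε) + (h y - H) / n = (1 / (n:ℝ)) * ((n:ℝ) * (g - ε) + (h y - H)) := by
            field_simp
        _ ≤ (1 / (n:ℝ)) * expVal P (stationaryPolicy u) y n
              (rewSum c (stationaryPolicy u) (fun _ => 1) n) :=
            mul_le_mul_of_nonneg_left hE (by positivity)
    have htarget : Tendsto (fun n : ℕ => (g - ε) + (h y - H) / n) atTop (𝓝 (g - ε)) := by
      have := (tendsto_const_nhds :
          Tendsto (fun _ : ℕ => g - ε) atTop (𝓝 (g - ε))).add
        (tendsto_const_div_atTop_nhds_zero_nat (h y - H))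
      simpa using this
    have hlim : liminf (fun n : ℕ => (g - ε) + (h y - H) / n) atTop
        ≤ liminf (fun n : ℕ => (1 / (n:ℝ)) * expVal P (stationaryPolicy u) y n
          (rewSum c (stationaryPolicy u) (fun _ => 1) n)) atTop := by
      refine liminf_le_liminf (eventually_atTop.mpr ⟨1, hseq⟩) ?_ ?_
      · exact isBoundedUnder_of ⟨(g - ε) - |h y - H|, fun n => by
          have := neg_abs_le_div_nat (h y - H) n
          linarith⟩
      · exact (isBoundedUnder_of (⟨M, fun n =>
          (abs_le.mp (abs_avg_le hP hM hM0 y (stationaryPolicy u) n)).2⟩ :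
            ∃ b, ∀ n : ℕ, (1 / (n:ℝ)) * expVal P (stationaryPolicy u) y n
              (rewSum c (stationaryPolicy u) (fun _ => 1) n) ≤ b)).isCoboundedUnder_ge
    rwa [htarget.liminf_eq] at hlim

lemma javg_le_M (hP : IsStochastic P) {M : ℝ} (hM : ∀ y a, |c y a| ≤ M) (hM0 : 0 ≤ M)
    (γ : ℝ) (y : E) (pol : Policy E U) : Javg P c γ y pol ≤ M := by
  unfold Javg
  split_ifs with hγ
  · exact liminf_le_of_frequently_le
      (Frequently.of_forall fun n => (abs_le.mp (abs_avg_le hP hM hM0 y pol n)).2)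
      (isBoundedUnder_of ⟨-M, fun n => (abs_le.mp (abs_avg_le hP hM hM0 y pol n)).1⟩)
  · exact liminf_le_of_frequently_le
      (Frequently.of_forall fun n => (abs_le.mp (abs_seq_le hP hM hM0 γ y pol n)).2)
      (isBoundedUnder_of ⟨-M, fun n => (abs_le.mp (abs_seq_le hP hM hM0 γ y pol n)).1⟩)

end PartB

/-- under condition (C), the optimal value of the long-run risk-sensitive
averaged criterion does not depend on the starting point. -/
theorem optimal_value_independent_of_start
    {E U : Type*} [Fintype E] [DecidableEq E] [Fintype U] [Nonempty E] [Nonempty U]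
    (P : U → E → E → ℝ) (c : E → U → ℝ)
    (hP : IsStochastic P) (hC : CondC P) :
    ∀ (γ : ℝ) (x x' : E),
      (⨆ pol : Policy E U, Javg P c γ x pol) = ⨆ pol : Policy E U, Javg P c γ x' pol := by
  intro γ x x'
  obtain ⟨t0, ht0⟩ := Finite.exists_min (fun t : U × E × E => P t.1 t.2.1 t.2.2)
  set δ : ℝ := P t0.1 t0.2.1 t0.2.2 with hδdef
  have hδ0 : 0 < δ := hC _ _ _
  have hδ : ∀ a y z, δ ≤ P a y z := fun a y z => ht0 (a, y, z)
  obtain ⟨M0, hM0'⟩ := Finite.exists_le fun p : E × U => |c p.1 p.2|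
  set M : ℝ := max M0 0 with hMdef
  have hM : ∀ y a, |c y a| ≤ M := fun y a => (hM0' (y, a)).trans (le_max_left _ _)
  have hMnn : (0:ℝ) ≤ M := le_max_right _ _
  rcases eq_or_ne γ 0 with rfl | hγ
  · have main : ∀ y y' : E, (⨆ pol : Policy E U, Javg P c 0 y pol)
        ≤ ⨆ pol : Policy E U, Javg P c 0 y' pol := by
      intro y y'
      refine le_of_forall_pos_le_add fun ε hε => ?_
      obtain ⟨g, hg⟩ := javg0_bounds hP hδ0 hδ hM hMnn (ε := ε / 2) (by linarith)
      have h1 : (⨆ pol : Policy E U, Javg P c 0 y pol) ≤ g + ε / 2 :=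
        ciSup_le fun pol => (hg y).1 pol
      obtain ⟨pol0, hpol0⟩ := (hg y').2
      have hbdd : BddAbove (Set.range fun pol : Policy E U => Javg P c 0 y' pol) := by
        refine ⟨g + ε / 2, ?_⟩
        rintro _ ⟨pol, rfl⟩
        exact (hg y').1 pol
      have h2 : g - ε / 2 ≤ ⨆ pol : Policy E U, Javg P c 0 y' pol :=
        hpol0.trans (le_ciSup hbdd pol0)
      linarith
    exact le_antisymm (main x x') (main x' x)
  · have main : ∀ y y' : E, (⨆ pol : Policy E U, Javg P c γ y pol)
        ≤ ⨆ pol : Policy E U, Javg P c γ y' pol := by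
      intro y y'
      have hbdd : BddAbove (Set.range fun pol : Policy E U => Javg P c γ y' pol) := by
        refine ⟨M, ?_⟩
        rintro _ ⟨pol, rfl⟩
        exact javg_le_M hP hM hMnn γ y' pol
      refine ciSup_le fun pol => ?_
      have heq := JavgA hP hC hδ0 hδ hM hMnn hγ y y' pol
      rw [← heq]
      exact le_ciSup hbdd _
    exact le_antisymm (main x x') (main x' x)
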